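/- Let Y be an S2-valued random variable with law ν, and ξ1, ξ2 uniform on [0,1] with Y, ξ1, ξ2 mutually independent. Suppose G1, G2 : S2×[0,1] → S1 are Borel measurable and each Xi = Gi(Y,ξi) is C-compatible with Y (E[h(Y)|F^{Xi}_α ∨ F^Y_α] = E[h(Y)|F^Y_α] for each α and bounded Borel h). Then X1 and X2 are jointly C-compatible with Y: for each α ∈ A and each bounded Borel h on S2, E[h(Y)|F^{X1}_α ∨ F^{X2}_α ∨ F^Y_α] = E[h(Y)|F^Y_α] a.s. -/

import Mathlib

open MeasureTheory ProbabilityTheory MeasurableSpace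

namespace Stmt8Aux

lemma integrable_of_bdd {Ω : Type} [MeasurableSpace Ω] {P : Measure Ω} [IsFiniteMeasure P]
    {f : Ω → ℝ} (hf : AEStronglyMeasurable f P) {C : ℝ} (h : ∀ᵐ ω ∂P, ‖f ω‖ ≤ C) :
    Integrable f P :=
  ⟨hf, HasFiniteIntegral.of_bounded h⟩

lemma sf_trim {Ω : Type} {m : MeasurableSpace Ω} [m0 : MeasurableSpace Ω] (P : Measure Ω)
    [IsFiniteMeasure P] (hm : m ≤ m0) : SigmaFinite (P.trim hm) := by
  haveI : IsFiniteMeasure (P.trim hm) := isFiniteMeasure_trim hm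
  infer_instance

lemma integral_mul_condexp {Ω : Type} {m : MeasurableSpace Ω} [m0 : MeasurableSpace Ω]
    {P : Measure Ω} [IsProbabilityMeasure P] (hm : m ≤ m0) {φ g : Ω → ℝ}
    (hφ : StronglyMeasurable[m] φ) {c : ℝ} (hφb : ∀ᵐ ω ∂P, ‖φ ω‖ ≤ c)
    (hg : Integrable g P) :
    ∫ ω, φ ω * g ω ∂P = ∫ ω, φ ω * (P[g|m]) ω ∂P := by
  haveI := sf_trim P hm
  have hmul : P[φ * g|m] =ᵐ[P] φ * P[g|m] :=
    condExp_stronglyMeasurable_mul_of_bound hm hφ hg c hφb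
  calc ∫ ω, φ ω * g ω ∂P = ∫ ω, (P[φ * g|m]) ω ∂P := (integral_condExp hm).symm
    _ = ∫ ω, φ ω * (P[g|m]) ω ∂P := integral_congr_ae hmul

lemma ae_norm_condexp_le {Ω : Type} {m : MeasurableSpace Ω} [m0 : MeasurableSpace Ω]
    {P : Measure Ω} {f : Ω → ℝ} {c : ℝ} (hc : 0 ≤ c) (hf : ∀ ω, ‖f ω‖ ≤ c) :
    ∀ᵐ ω ∂P, ‖(P[f|m]) ω‖ ≤ c := by
  have h1 : ∀ᵐ ω ∂P, |f ω| ≤ ((⟨c, hc⟩ : NNReal) : ℝ) :=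
    Filter.Eventually.of_forall fun ω => by
      simpa [Real.norm_eq_abs] using hf ω
  have h2 := ae_bdd_condExp_of_ae_bdd (m := m) (μ := P) h1
  filter_upwards [h2] with ω hω
  rw [Real.norm_eq_abs]; exact hω

lemma norm_indicator_le_one {γ : Type} (A : Set γ) (x : γ) :
    ‖Set.indicator A (1 : γ → ℝ) x‖ ≤ 1 := by
  classical
  rw [Set.indicator_apply]
  split_ifs <;> simp

lemma indicator_eq_indicator_one_mul {γ : Type} (s : Set γ) (f : γ → ℝ) (x : γ) :
    s.indicator f x = s.indicator 1 x * f x := by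
  classical
  rw [Set.indicator_apply, Set.indicator_apply]
  split_ifs <;> simp

lemma indicator_preimage_one {γ δ : Type} (f : γ → δ) (s : Set δ) (x : γ) :
    Set.indicator (f ⁻¹' s) (1 : γ → ℝ) x = Set.indicator s (1 : δ → ℝ) (f x) := by
  classical
  by_cases h : f x ∈ s <;> simp [Set.indicator_apply, h]

end Stmt8Aux

open Stmt8Aux

/-- Lemma 2.11 of Kurtz: two compatible randomized solutions `G1(Y,ξ1)`, `G2(Y,ξ2)`,
with `ξ1`, `ξ2` uniform and `Y, ξ1, ξ2` mutually independent, are automatically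
jointly compatible with `Y`. -/
theorem stmt8
    {S1 S2 : Type} [mS1 : MeasurableSpace S1] [TopologicalSpace S1] [PolishSpace S1] [BorelSpace S1]
    [mS2 : MeasurableSpace S2] [TopologicalSpace S2] [PolishSpace S2] [BorelSpace S2]
    (ν : Measure S2) [IsProbabilityMeasure ν]
    {Ω : Type} [MeasurableSpace Ω] (P : Measure Ω) [IsProbabilityMeasure P]
    (Y : Ω → S2) (ξ1 ξ2 : Ω → ℝ)
    (hY : Measurable Y) (hξ1 : Measurable ξ1) (hξ2 : Measurable ξ2)
    (hlaw : P.map (fun ω => (Y ω, ξ1 ω, ξ2 ω)) =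
      ν.prod ((volume.restrict (Set.Icc (0:ℝ) 1)).prod (volume.restrict (Set.Icc (0:ℝ) 1))))
    (G1 G2 : S2 × ℝ → S1) (hG1 : Measurable G1) (hG2 : Measurable G2)
    (X1 X2 : Ω → S1)
    (hX1 : X1 = fun ω => G1 (Y ω, ξ1 ω)) (hX2 : X2 = fun ω => G2 (Y ω, ξ2 ω))
    {A : Type}
    (B1 : A → MeasurableSpace S1) (hB1 : ∀ α, B1 α ≤ mS1)
    (B2 : A → MeasurableSpace S2) (hB2 : ∀ α, B2 α ≤ mS2)
    (hcompat1 : ∀ (α : A) (h : S2 → ℝ), Measurable h → (∃ C, ∀ x, |h x| ≤ C) →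
      P[fun ω => h (Y ω)|MeasurableSpace.comap X1 (B1 α) ⊔ MeasurableSpace.comap Y (B2 α)]
        =ᵐ[P] P[fun ω => h (Y ω)|MeasurableSpace.comap Y (B2 α)])
    (hcompat2 : ∀ (α : A) (h : S2 → ℝ), Measurable h → (∃ C, ∀ x, |h x| ≤ C) →
      P[fun ω => h (Y ω)|MeasurableSpace.comap X2 (B1 α) ⊔ MeasurableSpace.comap Y (B2 α)]
        =ᵐ[P] P[fun ω => h (Y ω)|MeasurableSpace.comap Y (B2 α)]) :
    ∀ (α : A) (h : S2 → ℝ), Measurable h → (∃ C, ∀ x, |h x| ≤ C) →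
      P[fun ω => h (Y ω)|MeasurableSpace.comap X1 (B1 α) ⊔ MeasurableSpace.comap X2 (B1 α)
          ⊔ MeasurableSpace.comap Y (B2 α)]
        =ᵐ[P] P[fun ω => h (Y ω)|MeasurableSpace.comap Y (B2 α)] := by
  classical
  intro α h hmeas hbdd
  obtain ⟨C0, hC0⟩ := hbdd
  set c : ℝ := max C0 0 with hcdef
  have hc0 : 0 ≤ c := le_max_right _ _
  have hC : ∀ x, ‖h x‖ ≤ c := fun x => by
    rw [Real.norm_eq_abs]; exact (hC0 x).trans (le_max_left _ _)
  -- basic measurability facts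
  have hX1m : Measurable X1 := by rw [hX1]; exact hG1.comp (hY.prodMk hξ1)
  have hX2m : Measurable X2 := by rw [hX2]; exact hG2.comp (hY.prodMk hξ2)
  set μ0 : Measure ℝ := volume.restrict (Set.Icc (0:ℝ) 1) with hμ0def
  haveI hμ0prob : IsProbabilityMeasure μ0 := by
    constructor
    rw [hμ0def, Measure.restrict_apply_univ, Real.volume_Icc]
    norm_num
  set T : Ω → S2 × ℝ × ℝ := fun ω => (Y ω, ξ1 ω, ξ2 ω) with hTdef
  have hTm : Measurable T := hY.prodMk (hξ1.prodMk hξ2)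
  have hmapY : P.map Y = ν := by
    have h1 : P.map Y = Measure.map Prod.fst (P.map T) := by
      rw [Measure.map_map measurable_fst hTm]; rfl
    rw [h1, hlaw, Measure.map_fst_prod]
    simp
  -- σ-algebra order facts
  have hFY_σY : MeasurableSpace.comap Y (B2 α) ≤ MeasurableSpace.comap Y mS2 :=
    MeasurableSpace.comap_mono (hB2 α)
  have hσY_le : MeasurableSpace.comap Y mS2 ≤ ‹MeasurableSpace Ω› := hY.comap_le
  have hFY_le : MeasurableSpace.comap Y (B2 α) ≤ ‹MeasurableSpace Ω› := hFY_σY.trans hσY_le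
  have hF1_le : MeasurableSpace.comap X1 (B1 α) ≤ ‹MeasurableSpace Ω› :=
    (MeasurableSpace.comap_mono (hB1 α)).trans hX1m.comap_le
  have hF2_le : MeasurableSpace.comap X2 (B1 α) ≤ ‹MeasurableSpace Ω› :=
    (MeasurableSpace.comap_mono (hB1 α)).trans hX2m.comap_le
  have hG_le : MeasurableSpace.comap X1 (B1 α) ⊔ MeasurableSpace.comap X2 (B1 α)
      ⊔ MeasurableSpace.comap Y (B2 α) ≤ ‹MeasurableSpace Ω› :=
    sup_le (sup_le hF1_le hF2_le) hFY_le
  have hF1Y_le : MeasurableSpace.comap X1 (B1 α) ⊔ MeasurableSpace.comap Y (B2 α)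
      ≤ ‹MeasurableSpace Ω› := sup_le hF1_le hFY_le
  have hF2Y_le : MeasurableSpace.comap X2 (B1 α) ⊔ MeasurableSpace.comap Y (B2 α)
      ≤ ‹MeasurableSpace Ω› := sup_le hF2_le hFY_le
  haveI := sf_trim P hFY_le
  haveI := sf_trim P hσY_le
  haveI := sf_trim P hG_le
  haveI := sf_trim P hF1Y_le
  haveI := sf_trim P hF2Y_le
  -- conditional probabilities of X_i given Y, computed explicitly
  set g1 : Set S1 → S2 → ℝ := fun B y => (μ0 (Prod.mk y ⁻¹' (G1 ⁻¹' B))).toReal with hg1def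
  set g2 : Set S1 → S2 → ℝ := fun B y => (μ0 (Prod.mk y ⁻¹' (G2 ⁻¹' B))).toReal with hg2def
  have hg1m : ∀ (B : Set S1), MeasurableSet B → Measurable (g1 B) := fun B hB =>
    (measurable_measure_prodMk_left (hG1 hB)).ennreal_toReal
  have hg2m : ∀ (B : Set S1), MeasurableSet B → Measurable (g2 B) := fun B hB =>
    (measurable_measure_prodMk_left (hG2 hB)).ennreal_toReal
  have htoReal_le_one : ∀ x : ENNReal, x ≤ 1 → x.toReal ≤ 1 := fun x hx => by
    simpa using ENNReal.toReal_mono ENNReal.one_ne_top hx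
  have hg1b : ∀ B y, ‖g1 B y‖ ≤ 1 := by
    intro B y
    rw [Real.norm_eq_abs, abs_of_nonneg ENNReal.toReal_nonneg]
    exact htoReal_le_one _ prob_le_one
  have hg2b : ∀ B y, ‖g2 B y‖ ≤ 1 := by
    intro B y
    rw [Real.norm_eq_abs, abs_of_nonneg ENNReal.toReal_nonneg]
    exact htoReal_le_one _ prob_le_one
  have hg1univ : ∀ y, g1 Set.univ y = 1 := by intro y; simp [hg1def]
  have hg2univ : ∀ y, g2 Set.univ y = 1 := by intro y; simp [hg2def]
  -- integrals of indicators over μ0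
  have hInd1 : ∀ (B : Set S1), MeasurableSet B → ∀ y,
      (∫ u, Set.indicator B (1 : S1 → ℝ) (G1 (y, u)) ∂μ0) = g1 B y := by
    intro B hB y
    have he : (fun u => Set.indicator B (1 : S1 → ℝ) (G1 (y, u)))
        = Set.indicator (Prod.mk y ⁻¹' (G1 ⁻¹' B)) (1 : ℝ → ℝ) := by
      funext u
      rw [indicator_preimage_one (Prod.mk y) (G1 ⁻¹' B) u, indicator_preimage_one G1 B]
    rw [he, integral_indicator_one (measurable_prodMk_left (hG1 hB))]; rfl
  have hInd2 : ∀ (B : Set S1), MeasurableSet B → ∀ y,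
      (∫ u, Set.indicator B (1 : S1 → ℝ) (G2 (y, u)) ∂μ0) = g2 B y := by
    intro B hB y
    have he : (fun u => Set.indicator B (1 : S1 → ℝ) (G2 (y, u)))
        = Set.indicator (Prod.mk y ⁻¹' (G2 ⁻¹' B)) (1 : ℝ → ℝ) := by
      funext u
      rw [indicator_preimage_one (Prod.mk y) (G2 ⁻¹' B) u, indicator_preimage_one G2 B]
    rw [he, integral_indicator_one (measurable_prodMk_left (hG2 hB))]; rfl
  -- the key Fubini computation
  have keyL : ∀ (A1 A2 : Set S1), MeasurableSet[B1 α] A1 → MeasurableSet[B1 α] A2 →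
      ∀ (θ : S2 → ℝ), Measurable θ → ∀ (cθ : ℝ), 0 ≤ cθ → (∀ y, ‖θ y‖ ≤ cθ) →
      ∫ ω, Set.indicator A1 1 (X1 ω) * Set.indicator A2 1 (X2 ω) * θ (Y ω) ∂P
        = ∫ ω, g1 A1 (Y ω) * g2 A2 (Y ω) * θ (Y ω) ∂P := by
    intro A1 A2 hA1 hA2 θ hθ cθ hcθ0 hcθ
    have hA1' : MeasurableSet A1 := hB1 α _ hA1
    have hA2' : MeasurableSet A2 := hB1 α _ hA2
    set Φ : S2 × ℝ × ℝ → ℝ := fun p =>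
      Set.indicator A1 1 (G1 (p.1, p.2.1)) * Set.indicator A2 1 (G2 (p.1, p.2.2)) * θ p.1
      with hΦdef
    have hΦm : Measurable Φ := by
      apply Measurable.mul
      · apply Measurable.mul
        · exact (measurable_one.indicator hA1').comp
            (hG1.comp (measurable_fst.prodMk (measurable_fst.comp measurable_snd)))
        · exact (measurable_one.indicator hA2').comp
            (hG2.comp (measurable_fst.prodMk (measurable_snd.comp measurable_snd)))
      · exact hθ.comp measurable_fst
    have hΦb : ∀ p, ‖Φ p‖ ≤ cθ := by
      intro p
      rw [hΦdef]
      simp only [norm_mul]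
      calc ‖Set.indicator A1 1 (G1 (p.1, p.2.1))‖ * ‖Set.indicator A2 1 (G2 (p.1, p.2.2))‖
            * ‖θ p.1‖
          ≤ 1 * 1 * cθ :=
            mul_le_mul (mul_le_mul (norm_indicator_le_one _ _) (norm_indicator_le_one _ _)
              (norm_nonneg _) zero_le_one) (hcθ p.1) (norm_nonneg _) (by norm_num)
        _ = cθ := by ring
    haveI : IsProbabilityMeasure (μ0.prod μ0) := by infer_instance
    haveI : IsProbabilityMeasure (ν.prod (μ0.prod μ0)) := by infer_instance
    have hΦint : Integrable Φ (ν.prod (μ0.prod μ0)) :=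
      integrable_of_bdd hΦm.aestronglyMeasurable (Filter.Eventually.of_forall hΦb)
    have hlhs : ∫ ω, Set.indicator A1 1 (X1 ω) * Set.indicator A2 1 (X2 ω) * θ (Y ω) ∂P
        = ∫ p, Φ p ∂(ν.prod (μ0.prod μ0)) := by
      have h1 : ∫ ω, Set.indicator A1 1 (X1 ω) * Set.indicator A2 1 (X2 ω) * θ (Y ω) ∂P
          = ∫ ω, Φ (T ω) ∂P := by
        apply integral_congr_ae
        filter_upwards with ω
        simp only [hΦdef, hTdef, hX1, hX2]
      rw [h1, ← integral_map hTm.aemeasurable hΦm.aestronglyMeasurable]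
      rw [show P.map T = ν.prod (μ0.prod μ0) from hlaw]
    have hinner : ∀ y, ∫ q, Φ (y, q) ∂(μ0.prod μ0) = g1 A1 y * g2 A2 y * θ y := by
      intro y
      have he : (fun q : ℝ × ℝ => Φ (y, q))
          = fun q : ℝ × ℝ => (fun u => Set.indicator A1 1 (G1 (y, u))) q.1
            * ((fun v => Set.indicator A2 1 (G2 (y, v)) * θ y) q.2) := by
        funext q
        simp only [hΦdef]
        ring
      have hpm := integral_prod_mul (μ := μ0) (ν := μ0)
        (fun u => Set.indicator A1 (1 : S1 → ℝ) (G1 (y, u)))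
        (fun v => Set.indicator A2 (1 : S1 → ℝ) (G2 (y, v)) * θ y)
      rw [he, hpm, hInd1 A1 hA1' y]
      have h2 : ∫ v, Set.indicator A2 1 (G2 (y, v)) * θ y ∂μ0
          = (∫ v, Set.indicator A2 1 (G2 (y, v)) ∂μ0) * θ y := by
        rw [integral_mul_const]
      rw [h2, hInd2 A2 hA2' y]
      ring
    rw [hlhs, integral_prod _ hΦint]
    simp only [hinner]
    have hFm : Measurable (fun y => g1 A1 y * g2 A2 y * θ y) :=
      ((hg1m A1 hA1').mul (hg2m A2 hA2')).mul hθ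
    rw [← hmapY, integral_map hY.aemeasurable hFm.aestronglyMeasurable]
  -- single-variable versions
  have keyL1 : ∀ (B : Set S1), MeasurableSet[B1 α] B →
      ∀ (θ : S2 → ℝ), Measurable θ → ∀ (cθ : ℝ), 0 ≤ cθ → (∀ y, ‖θ y‖ ≤ cθ) →
      ∫ ω, Set.indicator B 1 (X1 ω) * θ (Y ω) ∂P
        = ∫ ω, g1 B (Y ω) * θ (Y ω) ∂P := by
    intro B hB θ hθ cθ hcθ0 hcθ
    have h0 := keyL B Set.univ hB MeasurableSet.univ θ hθ cθ hcθ0 hcθ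
    simp only [Set.indicator_univ, Pi.one_apply, mul_one, hg2univ] at h0
    exact h0
  have keyL2 : ∀ (B : Set S1), MeasurableSet[B1 α] B →
      ∀ (θ : S2 → ℝ), Measurable θ → ∀ (cθ : ℝ), 0 ≤ cθ → (∀ y, ‖θ y‖ ≤ cθ) →
      ∫ ω, Set.indicator B 1 (X2 ω) * θ (Y ω) ∂P
        = ∫ ω, g2 B (Y ω) * θ (Y ω) ∂P := by
    intro B hB θ hθ cθ hcθ0 hcθ
    have h0 := keyL Set.univ B MeasurableSet.univ hB θ hθ cθ hcθ0 hcθ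
    simp only [Set.indicator_univ, Pi.one_apply, one_mul, hg1univ] at h0
    exact h0
  
  -- conditional expectation of indicators of X1 given the compatible σ-algebra
  have hb1 : ∀ (B : Set S1), MeasurableSet[B1 α] B →
      (fun ω => g1 B (Y ω)) =ᵐ[P]
        P[fun ω => Set.indicator B (1 : S1 → ℝ) (X1 ω)|MeasurableSpace.comap Y (B2 α)] := by
    intro B hB
    have hB' : MeasurableSet B := hB1 α _ hB
    have hFind_m : Measurable fun ω => Set.indicator B (1 : S1 → ℝ) (X1 ω) :=
      (measurable_one.indicator hB').comp hX1m
    have hFind_int : Integrable (fun ω => Set.indicator B (1 : S1 → ℝ) (X1 ω)) P :=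
      integrable_of_bdd hFind_m.aestronglyMeasurable
        (Filter.Eventually.of_forall fun ω => norm_indicator_le_one _ _)
    have hFind_sm : StronglyMeasurable[MeasurableSpace.comap X1 (B1 α)
        ⊔ MeasurableSpace.comap Y (B2 α)] (fun ω => Set.indicator B (1 : S1 → ℝ) (X1 ω)) := by
      have he : (fun ω => Set.indicator B (1 : S1 → ℝ) (X1 ω))
          = Set.indicator (X1 ⁻¹' B) (1 : Ω → ℝ) :=
        funext fun ω => (indicator_preimage_one X1 B ω).symm
      rw [he]
      exact stronglyMeasurable_one.indicator
        ((le_sup_left : MeasurableSpace.comap X1 (B1 α) ≤ _) _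
          (measurableSet_comap.mpr ⟨B, hB, rfl⟩))
    have hq_bdd : ∀ᵐ ω ∂P, ‖(P[fun ω => Set.indicator B (1 : S1 → ℝ) (X1 ω)|
        MeasurableSpace.comap Y (B2 α)]) ω‖ ≤ 1 :=
      ae_norm_condexp_le zero_le_one fun ω => norm_indicator_le_one _ _
    refine ae_eq_of_forall_setIntegral_eq_of_sigmaFinite' hσY_le
      (fun s _ _ => (integrable_of_bdd ((hg1m B hB').comp hY).aestronglyMeasurable
        (Filter.Eventually.of_forall fun ω => hg1b B (Y ω))).integrableOn)
      (fun s _ _ => integrable_condExp.integrableOn)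
      (fun s hs _ => ?_)
      (Measurable.stronglyMeasurable ((hg1m B hB').comp
        (Measurable.of_comap_le le_rfl))).aestronglyMeasurable
      (stronglyMeasurable_condExp.mono hFY_σY).aestronglyMeasurable
    obtain ⟨D, hD, rfl⟩ := measurableSet_comap.mp hs
    have hDm : MeasurableSet (Y ⁻¹' D) := hY hD
    have hIndDm : Measurable (Set.indicator D (1 : S2 → ℝ)) := measurable_one.indicator hD
    have hIndD_int : Integrable (fun ω => Set.indicator D (1 : S2 → ℝ) (Y ω)) P :=
      integrable_of_bdd (hIndDm.comp hY).aestronglyMeasurable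
        (Filter.Eventually.of_forall fun ω => norm_indicator_le_one _ _)
    have hkD_bdd : ∀ᵐ ω ∂P, ‖(P[fun ω => Set.indicator D (1 : S2 → ℝ) (Y ω)|
        MeasurableSpace.comap Y (B2 α)]) ω‖ ≤ 1 :=
      ae_norm_condexp_le zero_le_one fun ω => norm_indicator_le_one _ _
    calc ∫ ω in Y ⁻¹' D, g1 B (Y ω) ∂P
        = ∫ ω, g1 B (Y ω) * Set.indicator D 1 (Y ω) ∂P := by
          rw [← integral_indicator hDm]
          refine integral_congr_ae (Filter.Eventually.of_forall fun ω => ?_)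
          rw [indicator_eq_indicator_one_mul, indicator_preimage_one Y D ω, mul_comm]
      _ = ∫ ω, Set.indicator B 1 (X1 ω) * Set.indicator D 1 (Y ω) ∂P :=
          (keyL1 B hB _ hIndDm 1 zero_le_one fun y => norm_indicator_le_one _ _).symm
      _ = ∫ ω, Set.indicator B 1 (X1 ω)
            * (P[fun ω => Set.indicator D (1 : S2 → ℝ) (Y ω)|MeasurableSpace.comap X1 (B1 α)
                ⊔ MeasurableSpace.comap Y (B2 α)]) ω ∂P :=
          integral_mul_condexp hF1Y_le hFind_sm
            (Filter.Eventually.of_forall fun ω => norm_indicator_le_one _ _) hIndD_int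
      _ = ∫ ω, Set.indicator B 1 (X1 ω)
            * (P[fun ω => Set.indicator D (1 : S2 → ℝ) (Y ω)|
                MeasurableSpace.comap Y (B2 α)]) ω ∂P := by
          refine integral_congr_ae ?_
          filter_upwards [hcompat1 α (Set.indicator D 1) (measurable_one.indicator hD)
            ⟨1, fun x => by simpa [Real.norm_eq_abs] using norm_indicator_le_one D x⟩] with ω hω
          rw [hω]
      _ = ∫ ω, (P[fun ω => Set.indicator D (1 : S2 → ℝ) (Y ω)|MeasurableSpace.comap Y (B2 α)]) ω
            * Set.indicator B 1 (X1 ω) ∂P :=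
          integral_congr_ae (Filter.Eventually.of_forall fun ω => mul_comm _ _)
      _ = ∫ ω, (P[fun ω => Set.indicator D (1 : S2 → ℝ) (Y ω)|MeasurableSpace.comap Y (B2 α)]) ω
            * (P[fun ω => Set.indicator B (1 : S1 → ℝ) (X1 ω)|
                MeasurableSpace.comap Y (B2 α)]) ω ∂P :=
          integral_mul_condexp hFY_le stronglyMeasurable_condExp hkD_bdd hFind_int
      _ = ∫ ω, (P[fun ω => Set.indicator B (1 : S1 → ℝ) (X1 ω)|MeasurableSpace.comap Y (B2 α)]) ω
            * Set.indicator D 1 (Y ω) ∂P := by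
          rw [integral_mul_condexp hFY_le stronglyMeasurable_condExp hq_bdd hIndD_int]
          exact integral_congr_ae (Filter.Eventually.of_forall fun ω => mul_comm _ _)
      _ = ∫ ω in Y ⁻¹' D, (P[fun ω => Set.indicator B (1 : S1 → ℝ) (X1 ω)|
            MeasurableSpace.comap Y (B2 α)]) ω ∂P := by
          rw [← integral_indicator hDm]
          refine integral_congr_ae (Filter.Eventually.of_forall fun ω => ?_)
          rw [indicator_eq_indicator_one_mul, indicator_preimage_one Y D ω, mul_comm]
  have hb2 : ∀ (B : Set S1), MeasurableSet[B1 α] B →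
      (fun ω => g2 B (Y ω)) =ᵐ[P]
        P[fun ω => Set.indicator B (1 : S1 → ℝ) (X2 ω)|MeasurableSpace.comap Y (B2 α)] := by
    intro B hB
    have hB' : MeasurableSet B := hB1 α _ hB
    have hFind_m : Measurable fun ω => Set.indicator B (1 : S1 → ℝ) (X2 ω) :=
      (measurable_one.indicator hB').comp hX2m
    have hFind_int : Integrable (fun ω => Set.indicator B (1 : S1 → ℝ) (X2 ω)) P :=
      integrable_of_bdd hFind_m.aestronglyMeasurable
        (Filter.Eventually.of_forall fun ω => norm_indicator_le_one _ _)
    have hFind_sm : StronglyMeasurable[MeasurableSpace.comap X2 (B1 α)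
        ⊔ MeasurableSpace.comap Y (B2 α)] (fun ω => Set.indicator B (1 : S1 → ℝ) (X2 ω)) := by
      have he : (fun ω => Set.indicator B (1 : S1 → ℝ) (X2 ω))
          = Set.indicator (X2 ⁻¹' B) (1 : Ω → ℝ) :=
        funext fun ω => (indicator_preimage_one X2 B ω).symm
      rw [he]
      exact stronglyMeasurable_one.indicator
        ((le_sup_left : MeasurableSpace.comap X2 (B1 α) ≤ _) _
          (measurableSet_comap.mpr ⟨B, hB, rfl⟩))
    have hq_bdd : ∀ᵐ ω ∂P, ‖(P[fun ω => Set.indicator B (1 : S1 → ℝ) (X2 ω)|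
        MeasurableSpace.comap Y (B2 α)]) ω‖ ≤ 1 :=
      ae_norm_condexp_le zero_le_one fun ω => norm_indicator_le_one _ _
    refine ae_eq_of_forall_setIntegral_eq_of_sigmaFinite' hσY_le
      (fun s _ _ => (integrable_of_bdd ((hg2m B hB').comp hY).aestronglyMeasurable
        (Filter.Eventually.of_forall fun ω => hg2b B (Y ω))).integrableOn)
      (fun s _ _ => integrable_condExp.integrableOn)
      (fun s hs _ => ?_)
      (Measurable.stronglyMeasurable ((hg2m B hB').comp
        (Measurable.of_comap_le le_rfl))).aestronglyMeasurable
      (stronglyMeasurable_condExp.mono hFY_σY).aestronglyMeasurable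
    obtain ⟨D, hD, rfl⟩ := measurableSet_comap.mp hs
    have hDm : MeasurableSet (Y ⁻¹' D) := hY hD
    have hIndDm : Measurable (Set.indicator D (1 : S2 → ℝ)) := measurable_one.indicator hD
    have hIndD_int : Integrable (fun ω => Set.indicator D (1 : S2 → ℝ) (Y ω)) P :=
      integrable_of_bdd (hIndDm.comp hY).aestronglyMeasurable
        (Filter.Eventually.of_forall fun ω => norm_indicator_le_one _ _)
    have hkD_bdd : ∀ᵐ ω ∂P, ‖(P[fun ω => Set.indicator D (1 : S2 → ℝ) (Y ω)|
        MeasurableSpace.comap Y (B2 α)]) ω‖ ≤ 1 :=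
      ae_norm_condexp_le zero_le_one fun ω => norm_indicator_le_one _ _
    calc ∫ ω in Y ⁻¹' D, g2 B (Y ω) ∂P
        = ∫ ω, g2 B (Y ω) * Set.indicator D 1 (Y ω) ∂P := by
          rw [← integral_indicator hDm]
          refine integral_congr_ae (Filter.Eventually.of_forall fun ω => ?_)
          rw [indicator_eq_indicator_one_mul, indicator_preimage_one Y D ω, mul_comm]
      _ = ∫ ω, Set.indicator B 1 (X2 ω) * Set.indicator D 1 (Y ω) ∂P :=
          (keyL2 B hB _ hIndDm 1 zero_le_one fun y => norm_indicator_le_one _ _).symm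
      _ = ∫ ω, Set.indicator B 1 (X2 ω)
            * (P[fun ω => Set.indicator D (1 : S2 → ℝ) (Y ω)|MeasurableSpace.comap X2 (B1 α)
                ⊔ MeasurableSpace.comap Y (B2 α)]) ω ∂P :=
          integral_mul_condexp hF2Y_le hFind_sm
            (Filter.Eventually.of_forall fun ω => norm_indicator_le_one _ _) hIndD_int
      _ = ∫ ω, Set.indicator B 1 (X2 ω)
            * (P[fun ω => Set.indicator D (1 : S2 → ℝ) (Y ω)|
                MeasurableSpace.comap Y (B2 α)]) ω ∂P := by
          refine integral_congr_ae ?_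
          filter_upwards [hcompat2 α (Set.indicator D 1) (measurable_one.indicator hD)
            ⟨1, fun x => by simpa [Real.norm_eq_abs] using norm_indicator_le_one D x⟩] with ω hω
          rw [hω]
      _ = ∫ ω, (P[fun ω => Set.indicator D (1 : S2 → ℝ) (Y ω)|MeasurableSpace.comap Y (B2 α)]) ω
            * Set.indicator B 1 (X2 ω) ∂P :=
          integral_congr_ae (Filter.Eventually.of_forall fun ω => mul_comm _ _)
      _ = ∫ ω, (P[fun ω => Set.indicator D (1 : S2 → ℝ) (Y ω)|MeasurableSpace.comap Y (B2 α)]) ω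
            * (P[fun ω => Set.indicator B (1 : S1 → ℝ) (X2 ω)|
                MeasurableSpace.comap Y (B2 α)]) ω ∂P :=
          integral_mul_condexp hFY_le stronglyMeasurable_condExp hkD_bdd hFind_int
      _ = ∫ ω, (P[fun ω => Set.indicator B (1 : S1 → ℝ) (X2 ω)|MeasurableSpace.comap Y (B2 α)]) ω
            * Set.indicator D 1 (Y ω) ∂P := by
          rw [integral_mul_condexp hFY_le stronglyMeasurable_condExp hq_bdd hIndD_int]
          exact integral_congr_ae (Filter.Eventually.of_forall fun ω => mul_comm _ _)
      _ = ∫ ω in Y ⁻¹' D, (P[fun ω => Set.indicator B (1 : S1 → ℝ) (X2 ω)|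
            MeasurableSpace.comap Y (B2 α)]) ω ∂P := by
          rw [← integral_indicator hDm]
          refine integral_congr_ae (Filter.Eventually.of_forall fun ω => ?_)
          rw [indicator_eq_indicator_one_mul, indicator_preimage_one Y D ω, mul_comm]
  -- conditional independence of X1 and X2 given Y
  have hcondindep : ∀ (a1 a2 : Set S1), MeasurableSet[B1 α] a1 → MeasurableSet[B1 α] a2 →
      (fun ω => g1 a1 (Y ω) * g2 a2 (Y ω)) =ᵐ[P]
        P[fun ω => Set.indicator a1 (1 : S1 → ℝ) (X1 ω)
          * Set.indicator a2 (1 : S1 → ℝ) (X2 ω)|MeasurableSpace.comap Y mS2] := by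
    intro a1 a2 ha1 ha2
    have ha1' : MeasurableSet a1 := hB1 α _ ha1
    have ha2' : MeasurableSet a2 := hB1 α _ ha2
    have hFFm : Measurable (fun ω => Set.indicator a1 (1 : S1 → ℝ) (X1 ω)
        * Set.indicator a2 (1 : S1 → ℝ) (X2 ω)) :=
      ((measurable_one.indicator ha1').comp hX1m).mul ((measurable_one.indicator ha2').comp hX2m)
    have hFF_int : Integrable (fun ω => Set.indicator a1 (1 : S1 → ℝ) (X1 ω)
        * Set.indicator a2 (1 : S1 → ℝ) (X2 ω)) P :=
      integrable_of_bdd hFFm.aestronglyMeasurable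
        (Filter.Eventually.of_forall fun ω => by
          rw [norm_mul]
          calc ‖Set.indicator a1 (1 : S1 → ℝ) (X1 ω)‖ * ‖Set.indicator a2 (1 : S1 → ℝ) (X2 ω)‖
              ≤ 1 * 1 := mul_le_mul (norm_indicator_le_one _ _) (norm_indicator_le_one _ _)
                (norm_nonneg _) zero_le_one
            _ = 1 := mul_one 1)
    refine ae_eq_condExp_of_forall_setIntegral_eq hσY_le hFF_int
      (fun s _ _ => (integrable_of_bdd
        (((hg1m a1 ha1').comp hY).mul ((hg2m a2 ha2').comp hY)).aestronglyMeasurable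
        (Filter.Eventually.of_forall fun ω => by
          rw [Pi.mul_apply, norm_mul]
          calc ‖g1 a1 (Y ω)‖ * ‖g2 a2 (Y ω)‖ ≤ 1 * 1 :=
              mul_le_mul (hg1b _ _) (hg2b _ _) (norm_nonneg _) zero_le_one
            _ = 1 := mul_one 1)).integrableOn)
      (fun s hs _ => ?_)
      (Measurable.stronglyMeasurable (((hg1m a1 ha1').mul (hg2m a2 ha2')).comp
        (Measurable.of_comap_le le_rfl))).aestronglyMeasurable
    obtain ⟨D, hD, rfl⟩ := measurableSet_comap.mp hs
    have hDm : MeasurableSet (Y ⁻¹' D) := hY hD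
    have hIndDm : Measurable (Set.indicator D (1 : S2 → ℝ)) := measurable_one.indicator hD
    have key := keyL a1 a2 ha1 ha2 (Set.indicator D 1) hIndDm 1 zero_le_one
      (fun y => norm_indicator_le_one _ _)
    calc ∫ ω in Y ⁻¹' D, g1 a1 (Y ω) * g2 a2 (Y ω) ∂P
        = ∫ ω, g1 a1 (Y ω) * g2 a2 (Y ω) * Set.indicator D 1 (Y ω) ∂P := by
          rw [← integral_indicator hDm]
          refine integral_congr_ae (Filter.Eventually.of_forall fun ω => ?_)
          rw [indicator_eq_indicator_one_mul, indicator_preimage_one Y D ω]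
          ring
      _ = ∫ ω, Set.indicator a1 1 (X1 ω) * Set.indicator a2 1 (X2 ω)
            * Set.indicator D 1 (Y ω) ∂P := key.symm
      _ = ∫ ω in Y ⁻¹' D, Set.indicator a1 (1 : S1 → ℝ) (X1 ω)
            * Set.indicator a2 (1 : S1 → ℝ) (X2 ω) ∂P := by
          rw [← integral_indicator hDm]
          refine integral_congr_ae (Filter.Eventually.of_forall fun ω => ?_)
          rw [indicator_eq_indicator_one_mul, indicator_preimage_one Y D ω]
          ring
  -- the function h ∘ Y and its conditional expectation
  have hfY_int : Integrable (fun ω => h (Y ω)) P :=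
    integrable_of_bdd (hmeas.comp hY).aestronglyMeasurable
      (Filter.Eventually.of_forall fun ω => hC (Y ω))
  set k := P[fun ω => h (Y ω)|MeasurableSpace.comap Y (B2 α)] with hkdef
  have hk_bdd : ∀ᵐ ω ∂P, ‖k ω‖ ≤ c := ae_norm_condexp_le hc0 fun ω => hC (Y ω)
  -- the π-system of rectangles
  set piSys : Set (Set Ω) := {s | ∃ a1 a2 a3, MeasurableSet[B1 α] a1 ∧ MeasurableSet[B1 α] a2
    ∧ MeasurableSet[B2 α] a3 ∧ s = X1 ⁻¹' a1 ∩ X2 ⁻¹' a2 ∩ Y ⁻¹' a3} with hpidef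
  have hpi : IsPiSystem piSys := by
    rintro s ⟨a1, a2, a3, ha1, ha2, ha3, rfl⟩ t ⟨b1', b2', b3', hb1', hb2', hb3', rfl⟩ -
    exact ⟨a1 ∩ b1', a2 ∩ b2', a3 ∩ b3', ha1.inter hb1', ha2.inter hb2', ha3.inter hb3', by
      simp only [Set.preimage_inter]
      ext ω
      simp only [Set.mem_inter_iff]
      tauto⟩
  have hgen : MeasurableSpace.comap X1 (B1 α) ⊔ MeasurableSpace.comap X2 (B1 α)
      ⊔ MeasurableSpace.comap Y (B2 α) = MeasurableSpace.generateFrom piSys := by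
    apply le_antisymm
    · refine sup_le (sup_le ?_ ?_) ?_
      · intro s hs
        obtain ⟨B, hB, rfl⟩ := hs
        exact measurableSet_generateFrom ⟨B, Set.univ, Set.univ, hB, MeasurableSet.univ,
          MeasurableSet.univ, by simp⟩
      · intro s hs
        obtain ⟨B, hB, rfl⟩ := hs
        exact measurableSet_generateFrom ⟨Set.univ, B, Set.univ, MeasurableSet.univ, hB,
          MeasurableSet.univ, by simp⟩
      · intro s hs
        obtain ⟨B, hB, rfl⟩ := hs
        exact measurableSet_generateFrom ⟨Set.univ, Set.univ, B, MeasurableSet.univ,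
          MeasurableSet.univ, hB, by simp⟩
    · refine MeasurableSpace.generateFrom_le ?_
      rintro s ⟨a1, a2, a3, ha1, ha2, ha3, rfl⟩
      have h1 : MeasurableSet[MeasurableSpace.comap X1 (B1 α) ⊔ MeasurableSpace.comap X2 (B1 α)
          ⊔ MeasurableSpace.comap Y (B2 α)] (X1 ⁻¹' a1) :=
        (le_sup_left.trans le_sup_left : MeasurableSpace.comap X1 (B1 α) ≤ _) _
          (measurableSet_comap.mpr ⟨a1, ha1, rfl⟩)
      have h2 : MeasurableSet[MeasurableSpace.comap X1 (B1 α) ⊔ MeasurableSpace.comap X2 (B1 α)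
          ⊔ MeasurableSpace.comap Y (B2 α)] (X2 ⁻¹' a2) :=
        (le_sup_right.trans le_sup_left : MeasurableSpace.comap X2 (B1 α) ≤ _) _
          (measurableSet_comap.mpr ⟨a2, ha2, rfl⟩)
      have h3 : MeasurableSet[MeasurableSpace.comap X1 (B1 α) ⊔ MeasurableSpace.comap X2 (B1 α)
          ⊔ MeasurableSpace.comap Y (B2 α)] (Y ⁻¹' a3) :=
        (le_sup_right : MeasurableSpace.comap Y (B2 α) ≤ _) _
          (measurableSet_comap.mpr ⟨a3, ha3, rfl⟩)
      exact (h1.inter h2).inter h3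
  -- the basic case of the induction
  have hbasic : ∀ s ∈ piSys, ∫ ω in s, h (Y ω) ∂P = ∫ ω in s, k ω ∂P := by
    rintro s ⟨a1, a2, a3, ha1, ha2, ha3, rfl⟩
    have ha1' : MeasurableSet a1 := hB1 α _ ha1
    have ha2' : MeasurableSet a2 := hB1 α _ ha2
    have ha3' : MeasurableSet a3 := hB2 α _ ha3
    have hsm : MeasurableSet (X1 ⁻¹' a1 ∩ X2 ⁻¹' a2 ∩ Y ⁻¹' a3) :=
      ((hX1m ha1').inter (hX2m ha2')).inter (hY ha3')
    have hdec : ∀ (f : Ω → ℝ) (ω : Ω), (X1 ⁻¹' a1 ∩ X2 ⁻¹' a2 ∩ Y ⁻¹' a3).indicator f ω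
        = Set.indicator a1 1 (X1 ω) * Set.indicator a2 1 (X2 ω)
          * (Set.indicator a3 1 (Y ω) * f ω) := by
      intro f ω
      by_cases h1 : X1 ω ∈ a1 <;> by_cases h2 : X2 ω ∈ a2 <;> by_cases h3 : Y ω ∈ a3 <;>
        simp [Set.indicator_apply, Set.mem_inter_iff, Set.mem_preimage, h1, h2, h3]
    have hθm : Measurable (fun y => Set.indicator a3 (1 : S2 → ℝ) y * h y) :=
      (measurable_one.indicator ha3').mul hmeas
    have hθb : ∀ y, ‖Set.indicator a3 (1 : S2 → ℝ) y * h y‖ ≤ c := fun y => by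
      rw [norm_mul]
      calc ‖Set.indicator a3 (1 : S2 → ℝ) y‖ * ‖h y‖ ≤ 1 * c :=
          mul_le_mul (norm_indicator_le_one _ _) (hC y) (norm_nonneg _) zero_le_one
        _ = c := one_mul c
    have hq1_bdd : ∀ᵐ ω ∂P, ‖(P[fun ω => Set.indicator a1 (1 : S1 → ℝ) (X1 ω)|
        MeasurableSpace.comap Y (B2 α)]) ω‖ ≤ 1 :=
      ae_norm_condexp_le zero_le_one fun ω => norm_indicator_le_one _ _
    have hq2_bdd : ∀ᵐ ω ∂P, ‖(P[fun ω => Set.indicator a2 (1 : S1 → ℝ) (X2 ω)|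
        MeasurableSpace.comap Y (B2 α)]) ω‖ ≤ 1 :=
      ae_norm_condexp_le zero_le_one fun ω => norm_indicator_le_one _ _
    have hind_smFY : StronglyMeasurable[MeasurableSpace.comap Y (B2 α)]
        (fun ω => Set.indicator a3 (1 : S2 → ℝ) (Y ω)) := by
      have he : (fun ω => Set.indicator a3 (1 : S2 → ℝ) (Y ω))
          = Set.indicator (Y ⁻¹' a3) (1 : Ω → ℝ) :=
        funext fun ω => (indicator_preimage_one Y a3 ω).symm
      rw [he]
      exact stronglyMeasurable_one.indicator (measurableSet_comap.mpr ⟨a3, ha3, rfl⟩)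
    have hind_smσY : StronglyMeasurable[MeasurableSpace.comap Y mS2]
        (fun ω => Set.indicator a3 (1 : S2 → ℝ) (Y ω)) := hind_smFY.mono hFY_σY
    have hφsm : StronglyMeasurable[MeasurableSpace.comap Y (B2 α)]
        (fun ω => (P[fun ω => Set.indicator a1 (1 : S1 → ℝ) (X1 ω)|
            MeasurableSpace.comap Y (B2 α)]) ω
          * (P[fun ω => Set.indicator a2 (1 : S1 → ℝ) (X2 ω)|
            MeasurableSpace.comap Y (B2 α)]) ω
          * Set.indicator a3 1 (Y ω)) :=
      (stronglyMeasurable_condExp.mul stronglyMeasurable_condExp).mul hind_smFY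
    have hφ_bdd : ∀ᵐ ω ∂P, ‖(P[fun ω => Set.indicator a1 (1 : S1 → ℝ) (X1 ω)|
            MeasurableSpace.comap Y (B2 α)]) ω
          * (P[fun ω => Set.indicator a2 (1 : S1 → ℝ) (X2 ω)|
            MeasurableSpace.comap Y (B2 α)]) ω
          * Set.indicator a3 1 (Y ω)‖ ≤ 1 := by
      filter_upwards [hq1_bdd, hq2_bdd] with ω h1 h2
      rw [norm_mul, norm_mul]
      calc ‖(P[fun ω => Set.indicator a1 (1 : S1 → ℝ) (X1 ω)|
            MeasurableSpace.comap Y (B2 α)]) ω‖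
          * ‖(P[fun ω => Set.indicator a2 (1 : S1 → ℝ) (X2 ω)|
            MeasurableSpace.comap Y (B2 α)]) ω‖
          * ‖Set.indicator a3 (1 : S2 → ℝ) (Y ω)‖
          ≤ 1 * 1 * 1 := mul_le_mul (mul_le_mul h1 h2 (norm_nonneg _) zero_le_one)
            (norm_indicator_le_one _ _) (norm_nonneg _) (by norm_num)
        _ = 1 := by norm_num
    have hψsm : StronglyMeasurable[MeasurableSpace.comap Y mS2]
        (fun ω => Set.indicator a3 (1 : S2 → ℝ) (Y ω) * k ω) :=
      hind_smσY.mul (stronglyMeasurable_condExp.mono hFY_σY)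
    have hψ_bdd : ∀ᵐ ω ∂P, ‖Set.indicator a3 (1 : S2 → ℝ) (Y ω) * k ω‖ ≤ c := by
      filter_upwards [hk_bdd] with ω hω
      rw [norm_mul]
      calc ‖Set.indicator a3 (1 : S2 → ℝ) (Y ω)‖ * ‖k ω‖ ≤ 1 * c :=
          mul_le_mul (norm_indicator_le_one _ _) hω (norm_nonneg _) zero_le_one
        _ = c := one_mul c
    have hFF_int : Integrable (fun ω => Set.indicator a1 (1 : S1 → ℝ) (X1 ω)
        * Set.indicator a2 (1 : S1 → ℝ) (X2 ω)) P :=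
      integrable_of_bdd (((measurable_one.indicator ha1').comp hX1m).mul
          ((measurable_one.indicator ha2').comp hX2m)).aestronglyMeasurable
        (Filter.Eventually.of_forall fun ω => by
          rw [norm_mul]
          calc ‖Set.indicator a1 (1 : S1 → ℝ) (X1 ω)‖ * ‖Set.indicator a2 (1 : S1 → ℝ) (X2 ω)‖
              ≤ 1 * 1 := mul_le_mul (norm_indicator_le_one _ _) (norm_indicator_le_one _ _)
                (norm_nonneg _) zero_le_one
            _ = 1 := mul_one 1)
    have hLHS : ∫ ω in X1 ⁻¹' a1 ∩ X2 ⁻¹' a2 ∩ Y ⁻¹' a3, h (Y ω) ∂P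
        = ∫ ω, (P[fun ω => Set.indicator a1 (1 : S1 → ℝ) (X1 ω)|
            MeasurableSpace.comap Y (B2 α)]) ω
          * (P[fun ω => Set.indicator a2 (1 : S1 → ℝ) (X2 ω)|
            MeasurableSpace.comap Y (B2 α)]) ω
          * Set.indicator a3 1 (Y ω) * k ω ∂P := by
      calc ∫ ω in X1 ⁻¹' a1 ∩ X2 ⁻¹' a2 ∩ Y ⁻¹' a3, h (Y ω) ∂P
          = ∫ ω, Set.indicator a1 1 (X1 ω) * Set.indicator a2 1 (X2 ω)
              * (Set.indicator a3 1 (Y ω) * h (Y ω)) ∂P := by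
            rw [← integral_indicator hsm]
            exact integral_congr_ae (Filter.Eventually.of_forall fun ω => hdec _ ω)
        _ = ∫ ω, g1 a1 (Y ω) * g2 a2 (Y ω) * (Set.indicator a3 1 (Y ω) * h (Y ω)) ∂P :=
            keyL a1 a2 ha1 ha2 (fun y => Set.indicator a3 1 y * h y) hθm c hc0 hθb
        _ = ∫ ω, (P[fun ω => Set.indicator a1 (1 : S1 → ℝ) (X1 ω)|
              MeasurableSpace.comap Y (B2 α)]) ω
            * (P[fun ω => Set.indicator a2 (1 : S1 → ℝ) (X2 ω)|
              MeasurableSpace.comap Y (B2 α)]) ω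
            * (Set.indicator a3 1 (Y ω) * h (Y ω)) ∂P := by
            refine integral_congr_ae ?_
            filter_upwards [hb1 a1 ha1, hb2 a2 ha2] with ω h1 h2
            simp only [h1, h2]
        _ = ∫ ω, (P[fun ω => Set.indicator a1 (1 : S1 → ℝ) (X1 ω)|
              MeasurableSpace.comap Y (B2 α)]) ω
            * (P[fun ω => Set.indicator a2 (1 : S1 → ℝ) (X2 ω)|
              MeasurableSpace.comap Y (B2 α)]) ω
            * Set.indicator a3 1 (Y ω) * h (Y ω) ∂P :=
            integral_congr_ae (Filter.Eventually.of_forall fun ω => by ring)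
        _ = ∫ ω, (P[fun ω => Set.indicator a1 (1 : S1 → ℝ) (X1 ω)|
              MeasurableSpace.comap Y (B2 α)]) ω
            * (P[fun ω => Set.indicator a2 (1 : S1 → ℝ) (X2 ω)|
              MeasurableSpace.comap Y (B2 α)]) ω
            * Set.indicator a3 1 (Y ω) * k ω ∂P :=
            integral_mul_condexp hFY_le hφsm hφ_bdd hfY_int
    have hRHS : ∫ ω in X1 ⁻¹' a1 ∩ X2 ⁻¹' a2 ∩ Y ⁻¹' a3, k ω ∂P
        = ∫ ω, (P[fun ω => Set.indicator a1 (1 : S1 → ℝ) (X1 ω)|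
            MeasurableSpace.comap Y (B2 α)]) ω
          * (P[fun ω => Set.indicator a2 (1 : S1 → ℝ) (X2 ω)|
            MeasurableSpace.comap Y (B2 α)]) ω
          * Set.indicator a3 1 (Y ω) * k ω ∂P := by
      calc ∫ ω in X1 ⁻¹' a1 ∩ X2 ⁻¹' a2 ∩ Y ⁻¹' a3, k ω ∂P
          = ∫ ω, Set.indicator a3 (1 : S2 → ℝ) (Y ω) * k ω
              * (Set.indicator a1 (1 : S1 → ℝ) (X1 ω)
                * Set.indicator a2 (1 : S1 → ℝ) (X2 ω)) ∂P := by
            rw [← integral_indicator hsm]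
            refine integral_congr_ae (Filter.Eventually.of_forall fun ω => ?_)
            rw [hdec _ ω]
            ring
        _ = ∫ ω, Set.indicator a3 (1 : S2 → ℝ) (Y ω) * k ω
              * (P[fun ω => Set.indicator a1 (1 : S1 → ℝ) (X1 ω)
                * Set.indicator a2 (1 : S1 → ℝ) (X2 ω)|MeasurableSpace.comap Y mS2]) ω ∂P :=
            integral_mul_condexp hσY_le hψsm hψ_bdd hFF_int
        _ = ∫ ω, Set.indicator a3 (1 : S2 → ℝ) (Y ω) * k ω
              * (g1 a1 (Y ω) * g2 a2 (Y ω)) ∂P := by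
            refine integral_congr_ae ?_
            filter_upwards [hcondindep a1 a2 ha1 ha2] with ω hω
            simp only [← hω]
        _ = ∫ ω, Set.indicator a3 (1 : S2 → ℝ) (Y ω) * k ω
              * ((P[fun ω => Set.indicator a1 (1 : S1 → ℝ) (X1 ω)|
                  MeasurableSpace.comap Y (B2 α)]) ω
                * (P[fun ω => Set.indicator a2 (1 : S1 → ℝ) (X2 ω)|
                  MeasurableSpace.comap Y (B2 α)]) ω) ∂P := by
            refine integral_congr_ae ?_
            filter_upwards [hb1 a1 ha1, hb2 a2 ha2] with ω h1 h2
            simp only [h1, h2]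
        _ = ∫ ω, (P[fun ω => Set.indicator a1 (1 : S1 → ℝ) (X1 ω)|
              MeasurableSpace.comap Y (B2 α)]) ω
            * (P[fun ω => Set.indicator a2 (1 : S1 → ℝ) (X2 ω)|
              MeasurableSpace.comap Y (B2 α)]) ω
            * Set.indicator a3 1 (Y ω) * k ω ∂P :=
            integral_congr_ae (Filter.Eventually.of_forall fun ω => by ring)
    exact hLHS.trans hRHS.symm
  -- extend from the π-system to the generated σ-algebra
  have hall : ∀ s, MeasurableSet[MeasurableSpace.comap X1 (B1 α)
      ⊔ MeasurableSpace.comap X2 (B1 α) ⊔ MeasurableSpace.comap Y (B2 α)] s →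
      ∫ ω in s, h (Y ω) ∂P = ∫ ω in s, k ω ∂P := by
    intro s hs
    refine @MeasurableSpace.induction_on_inter Ω
      (MeasurableSpace.comap X1 (B1 α) ⊔ MeasurableSpace.comap X2 (B1 α)
        ⊔ MeasurableSpace.comap Y (B2 α))
      (fun t _ => ∫ ω in t, h (Y ω) ∂P = ∫ ω in t, k ω ∂P) piSys hgen hpi ?_ ?_ ?_ ?_ s hs
    · simp
    · exact hbasic
    · intro t htG hct
      have htm : MeasurableSet t := hG_le t htG
      have h2 := integral_add_compl₀ htm.nullMeasurableSet hfY_int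
      have h3 := integral_add_compl₀ htm.nullMeasurableSet
        (integrable_condExp : Integrable k P)
      have h4 : ∫ ω, k ω ∂P = ∫ ω, h (Y ω) ∂P := integral_condExp hFY_le
      linarith
    · intro f hdisj hmG hCf
      have hm' : ∀ i, MeasurableSet (f i) := fun i => hG_le _ (hmG i)
      rw [integral_iUnion hm' hdisj hfY_int.integrableOn,
        integral_iUnion hm' hdisj (integrable_condExp : Integrable k P).integrableOn]
      exact tsum_congr hCf
  -- conclude by uniqueness of conditional expectation
  have hkGmeas : AEStronglyMeasurable[MeasurableSpace.comap X1 (B1 α)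
      ⊔ MeasurableSpace.comap X2 (B1 α) ⊔ MeasurableSpace.comap Y (B2 α)] k P :=
    ((stronglyMeasurable_condExp : StronglyMeasurable[MeasurableSpace.comap Y (B2 α)] k).mono
      (le_sup_right : MeasurableSpace.comap Y (B2 α) ≤ MeasurableSpace.comap X1 (B1 α)
        ⊔ MeasurableSpace.comap X2 (B1 α) ⊔ MeasurableSpace.comap Y (B2 α))).aestronglyMeasurable
  exact (ae_eq_condExp_of_forall_setIntegral_eq hG_le hfY_int
    (fun s _ _ => (integrable_condExp : Integrable k P).integrableOn)
    (fun s hs _ => (hall s hs).symm) hkGmeas).symm
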